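/- Let Π be a CNF theory and Π⁺ its positive form (with fresh atom φ). If φ belongs to the unique minimal model of Π⁺ containing all atoms, i.e., if every minimal model of Π⁺ contains φ, then Π is inconsistent (has no model); otherwise the sets of minimal models of Π and Π⁺ coincide. -/
import Mathlib


structure Clause where
  head : Finset ℕ
  body : Finset ℕ
deriving DecidableEq

abbrev Theory := Finset Clause

/-- interpretation I satisfies clause c -/
def satC (I : Finset ℕ) (c : Clause) : Prop :=
  (c.head ∩ I).Nonempty ∨ ¬ c.body ⊆ I

def isModel (T : Theory) (I : Finset ℕ) : Prop := ∀ c ∈ T, satC I c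

def isMinModel (T : Theory) (I : Finset ℕ) : Prop :=
  isModel T I ∧ ∀ J ⊂ I, ¬ isModel T J

def Positive (T : Theory) : Prop := ∀ c ∈ T, c.head.Nonempty

def Horn (T : Theory) : Prop := ∀ c ∈ T, c.head.card = 1

/-- atoms occurring in a theory -/
def atoms (T : Theory) : Finset ℕ := T.biUnion (fun c => c.head ∪ c.body)

/-- c_{X←} : project head on X -/
def projHeadC (c : Clause) (X : Finset ℕ) : Clause := ⟨c.head ∩ X, c.body⟩
/-- c_X : project head and body on X -/
def projC (c : Clause) (X : Finset ℕ) : Clause := ⟨c.head ∩ X, c.body ∩ X⟩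

/-- Π_{X←} -/
def projHeadT (T : Theory) (X : Finset ℕ) : Theory :=
  (T.image (fun c => projHeadC c X)).filter (fun c => c.head.Nonempty)

/-- Π_X -/
def projT (T : Theory) (X : Finset ℕ) : Theory :=
  (T.image (fun c => projC c X)).filter (fun c => c.head.Nonempty)

/-- Π^{nd} : single-head fragment -/
def nd (T : Theory) : Theory := T.filter (fun c => c.head.card = 1)

/-- the steady set of M for Π is the minimal model of Π^{nd}_{M←} -/
def isSteady (T : Theory) (M S : Finset ℕ) : Prop :=
  isMinModel (nd (projHeadT T M)) S

def simpl (T : Theory) (M S : Finset ℕ) : Theory :=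
  T.filter (fun c => c.head ∩ S = ∅ ∧ c.body ⊆ M)

/-- simplified theory of Π w.r.t. M (with steady set S) -/
def simplT (T : Theory) (M S : Finset ℕ) : Theory := projT (simpl T M S) (M \ S)

/-- E erasable in M for T -/
def Erasable (T : Theory) (M E : Finset ℕ) : Prop :=
  E.Nonempty ∧ E ⊆ M ∧ isModel T (M \ E)

def Outbound (T : Theory) (Y Z : Finset ℕ) : Prop :=
  ∃ c ∈ T, (c.head ∩ Z).Nonempty ∧ (c.body ∩ (Y \ Z)).Nonempty ∧
    c.body ∩ Z = ∅ ∧ c.head ∩ (Y \ Z) = ∅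

def Elementary (T : Theory) (Y : Finset ℕ) : Prop :=
  Y.Nonempty ∧ Y ⊆ atoms T ∧ ∀ Z, Z ⊂ Y → Z.Nonempty → Outbound T Y Z

def HEF (T : Theory) : Prop :=
  ∀ c ∈ T, ∀ E, Elementary T E → (E ∩ c.head).card ≤ 1

def DisjunctiveSet (T : Theory) (S : Finset ℕ) : Prop :=
  ∃ c ∈ T, 1 < (c.head ∩ S).card

def SuperElementary (T : Theory) (X : Finset ℕ) : Prop :=
  Elementary T X ∧ ¬ Outbound T (atoms T) X

def posForm (T : Theory) (phi : ℕ) : Theory :=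
  T.filter (fun c => c.head.Nonempty) ∪
  (T.filter (fun c => c.head = ∅)).image (fun c => ⟨{phi}, c.body⟩) ∪
  (atoms T).image (fun a => ⟨{a}, {phi}⟩)


lemma satC_congr {c : Clause} {I J : Finset ℕ}
    (h : ∀ x ∈ c.head ∪ c.body, (x ∈ I ↔ x ∈ J)) : satC I c ↔ satC J c := by
  have h1 : c.head ∩ I = c.head ∩ J := by
    ext x
    simp only [Finset.mem_inter]
    constructor
    · rintro ⟨hx, hxI⟩; exact ⟨hx, (h x (Finset.mem_union_left _ hx)).1 hxI⟩
    · rintro ⟨hx, hxJ⟩; exact ⟨hx, (h x (Finset.mem_union_left _ hx)).2 hxJ⟩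
  have h2 : c.body ⊆ I ↔ c.body ⊆ J := by
    constructor
    · intro hb x hx; exact (h x (Finset.mem_union_right _ hx)).1 (hb hx)
    · intro hb x hx; exact (h x (Finset.mem_union_right _ hx)).2 (hb hx)
  unfold satC
  rw [h1, h2]

lemma clause_atoms_subset {T : Theory} {c : Clause} (hc : c ∈ T) :
    c.head ∪ c.body ⊆ atoms T := by
  unfold atoms
  exact Finset.subset_biUnion_of_mem (fun c => c.head ∪ c.body) hc

lemma exists_min (T : Theory) : ∀ I, isModel T I → ∃ N, N ⊆ I ∧ isMinModel T N := by
  intro I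
  induction I using Finset.strongInduction with
  | _ I ih =>
    intro hI
    by_cases h : ∃ J, J ⊂ I ∧ isModel T J
    · obtain ⟨J, hJI, hJ⟩ := h
      obtain ⟨N, hNJ, hN⟩ := ih J hJI hJ
      exact ⟨N, hNJ.trans hJI.subset, hN⟩
    · push_neg at h
      exact ⟨I, subset_rfl, hI, fun J hJ => h J hJ⟩

lemma mem_posForm {T : Theory} {phi : ℕ} {c : Clause} :
    c ∈ posForm T phi ↔
      (c ∈ T ∧ c.head.Nonempty) ∨
      (∃ d ∈ T, d.head = ∅ ∧ c = ⟨{phi}, d.body⟩) ∨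
      (∃ a ∈ atoms T, c = ⟨{a}, {phi}⟩) := by
  simp only [posForm, Finset.mem_union, Finset.mem_filter, Finset.mem_image]
  constructor
  · rintro ((⟨hc, hne⟩ | ⟨d, ⟨hd, hdh⟩, rfl⟩) | ⟨a, ha, rfl⟩)
    · exact Or.inl ⟨hc, hne⟩
    · exact Or.inr (Or.inl ⟨d, hd, hdh, rfl⟩)
    · exact Or.inr (Or.inr ⟨a, ha, rfl⟩)
  · rintro (⟨hc, hne⟩ | ⟨d, hd, hdh, rfl⟩ | ⟨a, ha, rfl⟩)
    · exact Or.inl (Or.inl ⟨hc, hne⟩)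
    · exact Or.inl (Or.inr ⟨d, ⟨hd, hdh⟩, rfl⟩)
    · exact Or.inr ⟨a, ha, rfl⟩

/-- Claim A -/
lemma model_posForm_of_model {T : Theory} {phi : ℕ} {M : Finset ℕ}
    (hM : isModel T M) (hphiM : phi ∉ M) : isModel (posForm T phi) M := by
  intro c hc
  rw [mem_posForm] at hc
  rcases hc with ⟨hc, _⟩ | ⟨d, hd, hdh, rfl⟩ | ⟨a, _, rfl⟩
  · exact hM c hc
  · rcases hM d hd with hh | hb
    · rw [hdh] at hh; simp at hh
    · exact Or.inr hb
  · refine Or.inr ?_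
    intro hsub
    exact hphiM (hsub (Finset.mem_singleton_self _))

/-- Claim B -/
lemma model_of_model_posForm {T : Theory} {phi : ℕ} {N : Finset ℕ}
    (hN : isModel (posForm T phi) N) (hphiN : phi ∉ N) : isModel T N := by
  intro c hc
  by_cases hne : c.head.Nonempty
  · exact hN c (mem_posForm.2 (Or.inl ⟨hc, hne⟩))
  · rw [Finset.not_nonempty_iff_eq_empty] at hne
    have := hN ⟨{phi}, c.body⟩ (mem_posForm.2 (Or.inr (Or.inl ⟨c, hc, hne, rfl⟩)))
    rcases this with hh | hb
    · exfalso
      obtain ⟨x, hx⟩ := hh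
      simp only [Finset.mem_inter, Finset.mem_singleton] at hx
      exact hphiN (hx.1 ▸ hx.2)
    · refine Or.inr hb
  
/-- Claim C -/
lemma atoms_subset_of_phi_mem {T : Theory} {phi : ℕ} {N : Finset ℕ}
    (hN : isModel (posForm T phi) N) (hphiN : phi ∈ N) : atoms T ⊆ N := by
  intro a ha
  have := hN ⟨{a}, {phi}⟩ (mem_posForm.2 (Or.inr (Or.inr ⟨a, ha, rfl⟩)))
  rcases this with hh | hb
  · obtain ⟨x, hx⟩ := hh
    simp only [Finset.mem_inter, Finset.mem_singleton] at hx
    exact hx.1 ▸ hx.2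
  · exfalso
    exact hb (Finset.singleton_subset_iff.2 hphiN)

lemma posForm_clause_atoms {T : Theory} {phi : ℕ} {c : Clause}
    (hc : c ∈ posForm T phi) : c.head ∪ c.body ⊆ atoms T ∪ {phi} := by
  rw [mem_posForm] at hc
  rcases hc with ⟨hc, _⟩ | ⟨d, hd, _, rfl⟩ | ⟨a, ha, rfl⟩
  · exact (clause_atoms_subset hc).trans Finset.subset_union_left
  · intro x hx
    simp only [Finset.mem_union, Finset.mem_singleton] at hx ⊢
    rcases hx with hx | hx
    · exact Or.inr hx
    · exact Or.inl (clause_atoms_subset hd (Finset.mem_union_right _ hx))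
  · intro x hx
    simp only [Finset.mem_union, Finset.mem_singleton] at hx ⊢
    rcases hx with hx | hx
    · exact Or.inl (hx ▸ ha)
    · exact Or.inr hx

lemma min_model_subset {T' : Theory} {A N : Finset ℕ}
    (hatoms : ∀ c ∈ T', c.head ∪ c.body ⊆ A)
    (hN : isMinModel T' N) : N ⊆ A := by
  by_contra h
  have hmod : isModel T' (N ∩ A) := by
    intro c hc
    rw [satC_congr (J := N) (fun x hx => by
      simp only [Finset.mem_inter]
      exact ⟨fun h => h.1, fun h => ⟨h, hatoms c hc hx⟩⟩)]
    exact hN.1 c hc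
  exact hN.2 (N ∩ A) (Finset.inter_subset_left.ssubset_of_ne (fun he => h (by
    intro x hx
    have := he ▸ hx
    exact (Finset.mem_inter.1 ((he.symm ▸ hx : x ∈ N ∩ A))).2))) hmod

/-- Full = atoms T ∪ {phi} is a model of posForm -/
lemma full_model {T : Theory} {phi : ℕ} : isModel (posForm T phi) (atoms T ∪ {phi}) := by
  intro c hc
  rw [mem_posForm] at hc
  rcases hc with ⟨hc, hne⟩ | ⟨d, hd, _, rfl⟩ | ⟨a, ha, rfl⟩
  · left
    obtain ⟨x, hx⟩ := hne
    exact ⟨x, Finset.mem_inter.2 ⟨hx, Finset.mem_union_left _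
      (clause_atoms_subset hc (Finset.mem_union_left _ hx))⟩⟩
  · left
    exact ⟨phi, Finset.mem_inter.2 ⟨Finset.mem_singleton_self _,
      Finset.mem_union_right _ (Finset.mem_singleton_self _)⟩⟩
  · left
    exact ⟨a, Finset.mem_inter.2 ⟨Finset.mem_singleton_self _,
      Finset.mem_union_left _ ha⟩⟩

theorem stmt17 (T : Theory) (phi : ℕ) (hphi : phi ∉ atoms T) :
    ((∀ N : Finset ℕ, isMinModel (posForm T phi) N → phi ∈ N) →
      ∀ M : Finset ℕ, ¬ isModel T M) ∧
    ((¬ ∀ N : Finset ℕ, isMinModel (posForm T phi) N → phi ∈ N) →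
      ∀ M : Finset ℕ, (isMinModel T M ↔ isMinModel (posForm T phi) M)) := by
  constructor
  · intro hall M hM
    -- M ∩ atoms T is a model of T not containing phi
    have hM' : isModel T (M ∩ atoms T) := by
      intro c hc
      rw [satC_congr (J := M) (fun x hx => by
        simp only [Finset.mem_inter]
        exact ⟨fun h => h.1, fun h => ⟨h, clause_atoms_subset hc hx⟩⟩)]
      exact hM c hc
    have hphiM : phi ∉ M ∩ atoms T := fun h => hphi (Finset.mem_inter.1 h).2
    have hmod := model_posForm_of_model hM' hphiM
    obtain ⟨N, hNsub, hNmin⟩ := exists_min _ _ hmod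
    exact hphiM (hNsub (hall N hNmin))
  · intro hnall M
    push_neg at hnall
    obtain ⟨N0, hN0min, hphiN0⟩ := hnall
    have hN0sub : N0 ⊆ atoms T ∪ {phi} :=
      min_model_subset (fun c hc => posForm_clause_atoms hc) hN0min
    have hN0T : N0 ⊆ atoms T := by
      intro x hx
      rcases Finset.mem_union.1 (hN0sub hx) with h | h
      · exact h
      · exact absurd (Finset.mem_singleton.1 h ▸ hx) hphiN0
    constructor
    · intro hMmin
      have hphiM : phi ∉ M := by
        intro hphiM
        apply hMmin.2 (M \ {phi})
        · exact Finset.sdiff_ssubset (Finset.singleton_subset_iff.2 hphiM)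
            (Finset.singleton_nonempty _)
        · intro c hc
          rw [satC_congr (J := M) (fun x hx => by
            simp only [Finset.mem_sdiff, Finset.mem_singleton]
            constructor
            · exact fun h => h.1
            · intro h
              refine ⟨h, fun he => hphi ?_⟩
              exact he ▸ clause_atoms_subset hc hx)]
          exact hMmin.1 c hc
      refine ⟨model_posForm_of_model hMmin.1 hphiM, ?_⟩
      intro J hJ hJmod
      have hphiJ : phi ∉ J := fun h => hphiM (hJ.subset h)
      exact hMmin.2 J hJ (model_of_model_posForm hJmod hphiJ)
    · intro hMmin
      have hphiM : phi ∉ M := by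
        intro hphiM
        have hfull : atoms T ∪ {phi} ⊆ M :=
          Finset.union_subset (atoms_subset_of_phi_mem hMmin.1 hphiM)
            (Finset.singleton_subset_iff.2 hphiM)
        have hMeq : M = atoms T ∪ {phi} := by
          by_contra hne
          exact hMmin.2 _ (hfull.ssubset_of_ne (Ne.symm hne)) full_model
        -- N0 ⊂ M is a model of posForm, contradiction
        apply hMmin.2 N0 _ hN0min.1
        rw [hMeq]
        refine (hN0T.trans Finset.subset_union_left).ssubset_of_ne ?_
        intro he
        exact hphiN0 (he ▸ Finset.mem_union_right _ (Finset.mem_singleton_self phi))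
      refine ⟨model_of_model_posForm hMmin.1 hphiM, ?_⟩
      intro J hJ hJmod
      have hphiJ : phi ∉ J := fun h => hphiM (hJ.subset h)
      exact hMmin.2 J hJ (model_posForm_of_model hJmod hphiJ)
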